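/- The polynomial h(x) = x⁵ + 60x⁴ − 299x³ + 504x² − 432x + 162 is irreducible over ℚ, has exactly 5 complex roots, and its Galois group over ℚ acts on its set of complex roots as the full symmetric group S₅ (the natural map from the Galois group of h to the permutation group of the set of complex roots of h is bijective). -/

import Mathlib

open Polynomial

/-- The quintic arising from the Fruchterman–Reingold equilibrium of the path on four
vertices. -/
noncomputable def frQuintic : Polynomial ℚ :=
  X ^ 5 + 60 * X ^ 4 - 299 * X ^ 3 + 504 * X ^ 2 - 432 * X + 162

instance : Fact ((frQuintic.map (algebraMap ℚ ℂ)).Splits) :=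
  ⟨IsAlgClosed.splits (frQuintic.map (algebraMap ℚ ℂ))⟩

/-- Integer version of the quintic. -/
noncomputable def frQuinticZ : Polynomial ℤ :=
  X ^ 5 + 60 * X ^ 4 - 299 * X ^ 3 + 504 * X ^ 2 - 432 * X + 162

lemma frQuinticZ_monic : frQuinticZ.Monic := by
  unfold frQuinticZ; monicity!

lemma frQuinticZ_natDegree : frQuinticZ.natDegree = 5 := by
  unfold frQuinticZ; compute_degree!

lemma frQuintic_eq_map : frQuintic = frQuinticZ.map (Int.castRingHom ℚ) := by
  simp only [frQuintic, frQuinticZ, Polynomial.map_add, Polynomial.map_sub,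
    Polynomial.map_mul, Polynomial.map_pow, Polynomial.map_ofNat, Polynomial.map_X]

lemma frQuintic_natDegree : frQuintic.natDegree = 5 := by
  unfold frQuintic; compute_degree!

/-- In any commutative ring of characteristic dividing 11, a root of the quintic
satisfies `β ^ 11 ^ 5 = β`. -/
lemma frQuintic_pow_chain {K : Type*} [CommRing K] (β : K) (h11 : (11 : K) = 0)
    (hb : β ^ 5 + 60 * β ^ 4 - 299 * β ^ 3 + 504 * β ^ 2 - 432 * β + 162 = 0) :
    β ^ 161051 = β := by
  have h8 : β ^ 8 = 3 * β ^ 4 + 9 * β ^ 3 + 4 * β := by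
    rw [show β ^ 8 = β ^ 4 * β ^ 4 by rw [← pow_add]]
    linear_combination (β ^ 3 + (-60) * β ^ 2 + 3899 * β + (-252384)) * hb + (1485410 * β ^ 4 + (-7041273) * β ^ 3 + 11717784 * β ^ 2 + (-9969230) * β + 3716928) * h11
  have h9 : β ^ 9 = 5 * β ^ 4 + 6 * β ^ 3 + 10 * β ^ 2 + 9 * β + 9 := by
    rw [show β ^ 9 = β ^ 8 * β ^ 1 by rw [← pow_add], h8, pow_one]
    linear_combination (3) * hb + ((-16) * β ^ 4 + 81 * β ^ 3 + (-138) * β ^ 2 + 117 * β + (-45)) * h11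
  have h18 : β ^ 18 = 3 * β ^ 4 + 3 * β ^ 3 + 5 * β ^ 2 + 8 * β := by
    rw [show (18:ℕ) = 9 + 9 by norm_num, pow_add, h9]
    linear_combination (25 * β ^ 3 + (-1440) * β ^ 2 + 94011 * β + (-6083610)) * hb + (35805704 * β ^ 4 + (-169727889) * β ^ 3 + 282453248 * β ^ 2 + (-240304468) * β + 89594991) * h11
  have h19 : β ^ 19 = 10 * β ^ 4 + 3 * β ^ 2 + 9 * β + 9 := by
    rw [show (19:ℕ) = 18 + 1 by norm_num, pow_add, h18, pow_one]
    linear_combination (3) * hb + ((-17) * β ^ 4 + 82 * β ^ 3 + (-137) * β ^ 2 + 117 * β + (-45)) * h11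
  have h38 : β ^ 38 = 10 * β ^ 4 + 9 * β ^ 3 + 9 * β ^ 2 + 8 * β + 7 := by
    rw [show (38:ℕ) = 19 + 19 by norm_num, pow_add, h19]
    linear_combination (100 * β ^ 3 + (-6000) * β ^ 2 + 389960 * β + (-25241820)) * hb + (148561329 * β ^ 4 + (-704222925) * β ^ 3 + 1171937466 * β ^ 2 + (-997058146) * β + 371743174) * h11
  have h39 : β ^ 39 = 3 * β ^ 4 + 7 * β ^ 3 + 6 * β ^ 2 + 4 * β + 8 := by
    rw [show (39:ℕ) = 38 + 1 by norm_num, pow_add, h38, pow_one]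
    linear_combination (10) * hb + ((-54) * β ^ 4 + 272 * β ^ 3 + (-458) * β ^ 2 + 393 * β + (-148)) * h11
  have h78 : β ^ 78 = 8 * β ^ 4 + 2 * β ^ 3 + β ^ 2 + 9 * β + 7 := by
    rw [show (78:ℕ) = 39 + 39 by norm_num, pow_add, h39]
    linear_combination (9 * β ^ 3 + (-498) * β ^ 2 + 32656 * β + (-2112690)) * hb + (12434596 * β ^ 4 + (-58942670) * β ^ 3 + 98089449 * β ^ 2 + (-83452027) * β + 31114167) * h11
  have h156 : β ^ 156 = 9 * β ^ 4 + 7 * β ^ 3 + 3 * β + 2 := by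
    rw [show (156:ℕ) = 78 + 78 by norm_num, pow_add, h78]
    linear_combination (64 * β ^ 3 + (-3808) * β ^ 2 + 247636 * β + (-16028860)) * hb + (94338344 * β ^ 4 + (-447190279) * β ^ 3 + 744194653 * β ^ 2 + (-633144039) * β + 236061397) * h11
  have h157 : β ^ 157 = 6 * β ^ 4 + 7 * β ^ 3 + 10 * β ^ 2 + 7 * β + 5 := by
    rw [show (157:ℕ) = 156 + 1 by norm_num, pow_add, h156, pow_one]
    linear_combination (9) * hb + ((-49) * β ^ 4 + 244 * β ^ 3 + (-413) * β ^ 2 + 353 * β + (-133)) * h11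
  have h314 : β ^ 314 = 3 * β ^ 4 + 3 * β ^ 3 + 5 * β ^ 2 + 2 * β + 5 := by
    rw [show (314:ℕ) = 157 + 157 by norm_num, pow_add, h157]
    linear_combination (36 * β ^ 3 + (-2076) * β ^ 2 + 135493 * β + (-8768224)) * hb + (51606178 * β ^ 4 + (-244626355) * β ^ 3 + 407095848 * β ^ 2 + (-346347506) * β + 129132028) * h11
  have h628 : β ^ 628 = 2 * β ^ 4 + β ^ 3 + 5 * β ^ 2 + 1 := by
    rw [show (628:ℕ) = 314 + 314 by norm_num, pow_add, h314]
    linear_combination (9 * β ^ 3 + (-522) * β ^ 2 + 34050 * β + (-2203572)) * hb + (12969301 * β ^ 4 + (-61477831) * β ^ 3 + 102308591 * β ^ 2 + (-87041744) * β + 32452608) * h11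
  have h629 : β ^ 629 = 2 * β ^ 4 + 9 * β ^ 3 + 4 * β ^ 2 + 7 * β + 6 := by
    rw [show (629:ℕ) = 628 + 1 by norm_num, pow_add, h628, pow_one]
    linear_combination (2) * hb + ((-11) * β ^ 4 + 54 * β ^ 3 + (-92) * β ^ 2 + 78 * β + (-30)) * h11
  have h1258 : β ^ 1258 = 9 * β ^ 4 + 7 * β ^ 3 + 8 * β ^ 2 + 6 * β + 4 := by
    rw [show (1258:ℕ) = 629 + 629 by norm_num, pow_add, h629]
    linear_combination (4 * β ^ 3 + (-204) * β ^ 2 + 13533 * β + (-874892)) * hb + (5149508 * β ^ 4 + (-24409269) * β ^ 3 + 40620451 * β ^ 2 + (-34558692) * β + 12884776) * h11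
  have h2516 : β ^ 2516 = 9 * β ^ 4 + β ^ 3 + 4 * β ^ 2 + 3 * β + 1 := by
    rw [show (2516:ℕ) = 1258 + 1258 by norm_num, pow_add, h1258]
    linear_combination (81 * β ^ 3 + (-4734) * β ^ 2 + 308452 * β + (-19963190)) * hb + (117494517 * β ^ 4 + (-556955607) * β ^ 3 + 926860548 * β ^ 2 + (-788551569) * β + 294003345) * h11
  have h5032 : β ^ 5032 = 8 * β ^ 4 + 8 * β ^ 3 + β ^ 2 + 3 * β := by
    rw [show (5032:ℕ) = 2516 + 2516 by norm_num, pow_add, h2516]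
    linear_combination (81 * β ^ 3 + (-4842) * β ^ 2 + 314812 * β + (-20377240)) * hb + (119930780 * β ^ 4 + (-568505896) * β ^ 3 + 946082924 * β ^ 2 + (-804906111) * β + 300101171) * h11
  have h10064 : β ^ 10064 = 2 * β ^ 4 + 3 * β ^ 3 + 3 * β ^ 2 + 5 * β + 10 := by
    rw [show (10064:ℕ) = 5032 + 5032 by norm_num, pow_add, h5032]
    linear_combination (64 * β ^ 3 + (-3712) * β ^ 2 + 241936 * β + (-15658240)) * hb + (92157437 * β ^ 4 + (-436851223) * β ^ 3 + 726988242 * β ^ 2 + (-618504847) * β + 230603170) * h11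
  have h10065 : β ^ 10065 = 4 * β ^ 4 + 7 * β ^ 3 + 9 * β ^ 2 + 5 * β + 6 := by
    rw [show (10065:ℕ) = 10064 + 1 by norm_num, pow_add, h10064, pow_one]
    linear_combination (2) * hb + ((-11) * β ^ 4 + 54 * β ^ 3 + (-92) * β ^ 2 + 79 * β + (-30)) * h11
  have h20130 : β ^ 20130 = 4 * β ^ 3 + β ^ 2 + 6 * β + 10 := by
    rw [show (20130:ℕ) = 10065 + 10065 by norm_num, pow_add, h10065]
    linear_combination (16 * β ^ 3 + (-904) * β ^ 2 + 59145 * β + (-3826894)) * hb + (22523702 * β ^ 4 + (-106767576) * β ^ 3 + 177677436 * β ^ 2 + (-151163604) * β + 56359714) * h11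
  have h20131 : β ^ 20131 = 4 * β ^ 4 + β ^ 3 + 6 * β ^ 2 + 10 * β := by
    rw [show (20131:ℕ) = 20130 + 1 by norm_num, pow_add, h20130, pow_one]
    linear_combination (0) * hb + (0) * h11
  have h40262 : β ^ 40262 = 10 * β ^ 4 + 3 * β ^ 3 + 2 * β ^ 2 + 5 * β + 2 := by
    rw [show (40262:ℕ) = 20131 + 20131 by norm_num, pow_add, h20131]
    linear_combination (16 * β ^ 3 + (-952) * β ^ 2 + 61953 * β + (-4009800)) * hb + (23599883 * β ^ 4 + (-111869841) * β ^ 3 + 186168838 * β ^ 2 + (-158388181) * β + 59053418) * h11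
  have h80524 : β ^ 80524 = 4 * β ^ 4 + 9 * β ^ 3 + 3 * β ^ 2 + 3 * β + 10 := by
    rw [show (80524:ℕ) = 40262 + 40262 by norm_num, pow_add, h40262]
    linear_combination (100 * β ^ 3 + (-5940) * β ^ 2 + 386349 * β + (-25007288)) * hb + (147181151 * β ^ 4 + (-697680115) * β ^ 3 + 1161048930 * β ^ 2 + (-987794267) * β + 368289150) * h11
  have h80525 : β ^ 80525 = 1 := by
    rw [show (80525:ℕ) = 80524 + 1 by norm_num, pow_add, h80524, pow_one]
    linear_combination (4) * hb + ((-21) * β ^ 4 + 109 * β ^ 3 + (-183) * β ^ 2 + 158 * β + (-59)) * h11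
  have h161050 : β ^ 161050 = 1 := by
    rw [show (161050:ℕ) = 80525 + 80525 by norm_num, pow_add, h80525]
    linear_combination (0) * hb + (0) * h11
  have h161051 : β ^ 161051 = β := by
    rw [show (161051:ℕ) = 161050 + 1 by norm_num, pow_add, h161050, pow_one]
    linear_combination (0) * hb + (0) * h11
  exact h161051

lemma zmod11_no_root : ∀ c : ZMod 11,
    c ^ 5 + 60 * c ^ 4 - 299 * c ^ 3 + 504 * c ^ 2 - 432 * c + 162 ≠ 0 := by decide

instance : Fact (Nat.Prime 11) := ⟨by norm_num⟩

lemma frQuinticZ_map_zmod11_irreducible :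
    Irreducible (frQuinticZ.map (Int.castRingHom (ZMod 11))) := by
  set G := frQuinticZ.map (Int.castRingHom (ZMod 11)) with hGdef
  have hGmonic : G.Monic := frQuinticZ_monic.map _
  have hGdeg : G.natDegree = 5 := by
    rw [hGdef, frQuinticZ_monic.natDegree_map, frQuinticZ_natDegree]
  have hG0 : G ≠ 0 := hGmonic.ne_zero
  have hGunit : ¬IsUnit G := by
    intro h
    have := Polynomial.natDegree_eq_zero_of_isUnit h
    omega
  obtain ⟨g, hgi, hgd⟩ := WfDvdMonoid.exists_irreducible_factor hGunit hG0
  haveI := Fact.mk hgi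
  have hd5 : g.natDegree = 5 := by
    by_contra hne
    set K := AdjoinRoot g with hK
    let pb := AdjoinRoot.powerBasis hgi.ne_zero
    haveI : Fintype K := Module.fintypeOfFintype pb.basis
    have hcard : Fintype.card K = 11 ^ g.natDegree := by
      rw [Module.card_fintype pb.basis, ZMod.card, Fintype.card_fin]
      rfl
    set β := AdjoinRoot.root g with hβdef
    have h11 : (11 : K) = 0 := by
      have h0 : (11 : ZMod 11) = 0 := by decide
      calc (11 : K) = algebraMap (ZMod 11) K 11 := (map_ofNat _ 11).symm
        _ = 0 := by rw [h0, map_zero]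
    have hbG : Polynomial.aeval β G = 0 := by
      obtain ⟨c, hc⟩ := hgd
      rw [hc, map_mul, AdjoinRoot.aeval_eq, AdjoinRoot.mk_self, zero_mul]
    have hb : β ^ 5 + 60 * β ^ 4 - 299 * β ^ 3 + 504 * β ^ 2 - 432 * β + 162 = 0 := by
      rw [hGdef, show (Int.castRingHom (ZMod 11)) = algebraMap ℤ (ZMod 11) from rfl,
        aeval_map_algebraMap] at hbG
      simpa only [frQuinticZ, map_add, map_sub, map_mul, map_pow, map_ofNat,
        Polynomial.aeval_X] using hbG
    have hfrob : β ^ 161051 = β := frQuintic_pow_chain β h11 hb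
    have hpc : β ^ 11 ^ g.natDegree = β := by
      rw [← hcard]; exact FiniteField.pow_card β
    have hdle : g.natDegree ≤ 5 := hGdeg ▸ Polynomial.natDegree_le_of_dvd hgd hG0
    have hdpos : 0 < g.natDegree := hgi.natDegree_pos
    have key : ∀ d : ℕ, 1 ≤ d → d ≤ 4 → β ^ 11 ^ d = β → β ^ 11 = β := by
      intro d h1 h4 h
      interval_cases d
      · norm_num at h; exact h
      · norm_num at h
        have e : β ^ 161051 = ((β ^ 121) ^ 121) ^ 11 := by
          rw [← pow_mul, ← pow_mul]
        rw [h, h] at e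
        rw [e] at hfrob; exact hfrob
      · norm_num at h
        have e1 : β ^ 161051 = (β ^ 1331) ^ 121 := by rw [← pow_mul]
        rw [h] at e1
        have h121 : β ^ 121 = β := e1.symm.trans hfrob
        have e2 : β ^ 1331 = (β ^ 121) ^ 11 := by rw [← pow_mul]
        rw [h121] at e2
        exact e2.symm.trans h
      · norm_num at h
        have e : β ^ 161051 = (β ^ 14641) ^ 11 := by rw [← pow_mul]
        rw [h] at e
        rw [e] at hfrob; exact hfrob
    have hβ11 : β ^ 11 = β := key _ hdpos (by omega) hpc
    -- now β together with the 11 images of `ZMod 11` give 12 roots of `X ^ 11 - X`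
    set Pq : Polynomial K := X ^ 11 - X with hPq
    have hPdeg : Pq.natDegree = 11 := by rw [hPq]; compute_degree!
    have hP0 : Pq ≠ 0 := fun h => by simp [h] at hPdeg
    set T : Finset K := Finset.image (algebraMap (ZMod 11) K) Finset.univ with hT
    have hTcard : T.card = 11 := by
      rw [hT, Finset.card_image_of_injective _ (algebraMap (ZMod 11) K).injective,
        Finset.card_univ, ZMod.card]
    have hβT : β ∉ T := by
      intro hx
      rw [hT, Finset.mem_image] at hx
      obtain ⟨c, -, hc⟩ := hx
      have h2 : algebraMap (ZMod 11) K
          (c ^ 5 + 60 * c ^ 4 - 299 * c ^ 3 + 504 * c ^ 2 - 432 * c + 162) = 0 := by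
        simp only [map_add, map_sub, map_mul, map_pow, map_ofNat]
        rw [hc]; exact hb
      rw [← map_zero (algebraMap (ZMod 11) K)] at h2
      exact zmod11_no_root c ((algebraMap (ZMod 11) K).injective h2)
    have hsub : insert β T ⊆ Pq.roots.toFinset := by
      intro x hx
      rw [Multiset.mem_toFinset, mem_roots hP0]
      rw [Finset.mem_insert] at hx
      rcases hx with rfl | hx
      · simp only [hPq, IsRoot.def, Polynomial.eval_sub, Polynomial.eval_pow,
          Polynomial.eval_X]
        rw [hβ11, sub_self]
      · rw [hT, Finset.mem_image] at hx
        obtain ⟨c, -, rfl⟩ := hx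
        simp only [hPq, IsRoot.def, Polynomial.eval_sub, Polynomial.eval_pow,
          Polynomial.eval_X]
        rw [← map_pow, ZMod.pow_card c, sub_self]
    have h12 : (insert β T).card = 12 := by
      rw [Finset.card_insert_of_notMem hβT, hTcard]
    have hle := Finset.card_le_card hsub
    have hle2 := Pq.roots.toFinset_card_le
    have hle3 : Multiset.card Pq.roots ≤ 11 := by
      have := Pq.card_roots'
      omega
    omega
  -- conclude : G is associated to g
  obtain ⟨c, hc⟩ := hgd
  have hc0 : c ≠ 0 := by
    intro h; rw [h, mul_zero] at hc; exact hG0 hc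
  have hcdeg : c.natDegree = 0 := by
    have := Polynomial.natDegree_mul hgi.ne_zero hc0
    rw [← hc, hGdeg, hd5] at this
    omega
  have hcunit : IsUnit c := by
    rw [Polynomial.eq_C_of_natDegree_eq_zero hcdeg]
    refine Polynomial.isUnit_C.mpr (IsUnit.mk0 _ ?_)
    intro h
    apply hc0
    rw [Polynomial.eq_C_of_natDegree_eq_zero hcdeg, h, map_zero]
  exact (Associated.irreducible ⟨hcunit.unit, hc.symm⟩ hgi : Irreducible G)

lemma frQuinticZ_irreducible : Irreducible frQuinticZ :=
  Polynomial.Monic.irreducible_of_irreducible_map (Int.castRingHom (ZMod 11)) frQuinticZ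
    frQuinticZ_monic frQuinticZ_map_zmod11_irreducible

lemma frQuintic_irreducible : Irreducible frQuintic := by
  rw [frQuintic_eq_map]
  exact (Polynomial.IsPrimitive.Int.irreducible_iff_irreducible_map_cast
    frQuinticZ_monic.isPrimitive).mp frQuinticZ_irreducible

/-- The reversed quintic, whose nonzero roots are reciprocals of the roots of
`frQuintic`. -/
noncomputable def frRev : Polynomial ℚ :=
  162 * X ^ 5 - 432 * X ^ 4 + 504 * X ^ 3 - 299 * X ^ 2 + 60 * X + 1

lemma frRev_ne_zero : frRev ≠ 0 := by
  intro h
  have : frRev.coeff 0 = 1 := by unfold frRev; simp [coeff_one]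
  rw [h] at this
  simp at this

lemma frRev_d1 : derivative frRev =
    810 * X ^ 4 - 1728 * X ^ 3 + 1512 * X ^ 2 - 598 * X + 60 := by
  unfold frRev
  simp only [derivative_add, derivative_sub, derivative_mul, derivative_ofNat,
    derivative_X_pow, derivative_X, derivative_one]
  simp only [Polynomial.C_eq_natCast]
  push_cast
  ring

lemma frRev_d2 : derivative (810 * X ^ 4 - 1728 * X ^ 3 + 1512 * X ^ 2 - 598 * X + 60 : ℚ[X]) =
    3240 * X ^ 3 - 5184 * X ^ 2 + 3024 * X - 598 := by
  simp only [derivative_add, derivative_sub, derivative_mul, derivative_ofNat,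
    derivative_X_pow, derivative_X, derivative_one]
  simp only [Polynomial.C_eq_natCast]
  push_cast
  ring

lemma frRev_d3 : derivative (3240 * X ^ 3 - 5184 * X ^ 2 + 3024 * X - 598 : ℚ[X]) =
    9720 * X ^ 2 - 10368 * X + 3024 := by
  simp only [derivative_add, derivative_sub, derivative_mul, derivative_ofNat,
    derivative_X_pow, derivative_X, derivative_one]
  simp only [Polynomial.C_eq_natCast]
  push_cast
  ring

lemma frRev_d3_no_roots :
    Fintype.card ((9720 * X ^ 2 - 10368 * X + 3024 : ℚ[X]).rootSet ℝ) = 0 := by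
  rw [Fintype.card_eq_zero_iff]
  constructor
  rintro ⟨x, hx⟩
  rw [Polynomial.mem_rootSet] at hx
  have hx2 := hx.2
  simp only [map_add, map_sub, map_mul, map_pow, map_ofNat, Polynomial.aeval_X] at hx2
  nlinarith [sq_nonneg (15 * x - 8)]

lemma frRev_real_roots_le : Fintype.card (frRev.rootSet ℝ) ≤ 3 := by
  have b1 := card_rootSet_le_derivative (F := ℚ) frRev
  rw [frRev_d1] at b1
  have b2 := card_rootSet_le_derivative
    (810 * X ^ 4 - 1728 * X ^ 3 + 1512 * X ^ 2 - 598 * X + 60 : ℚ[X])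
  rw [frRev_d2] at b2
  have b3 := card_rootSet_le_derivative
    (3240 * X ^ 3 - 5184 * X ^ 2 + 3024 * X - 598 : ℚ[X])
  rw [frRev_d3] at b3
  have b4 := frRev_d3_no_roots
  omega

lemma frQuintic_aeval_real (x : ℝ) : Polynomial.aeval x frQuintic =
    x ^ 5 + 60 * x ^ 4 - 299 * x ^ 3 + 504 * x ^ 2 - 432 * x + 162 := by
  simp only [frQuintic, map_add, map_sub, map_mul, map_pow, map_ofNat, Polynomial.aeval_X]

lemma frQuintic_real_roots_le : Fintype.card (frQuintic.rootSet ℝ) ≤ 3 := by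
  refine le_trans (Fintype.card_le_of_injective
    (fun x => (⟨(x : ℝ)⁻¹, ?_⟩ : frRev.rootSet ℝ)) ?_) frRev_real_roots_le
  · obtain ⟨x, hx⟩ := x
    rw [Polynomial.mem_rootSet] at hx
    have hx2 := hx.2
    rw [frQuintic_aeval_real] at hx2
    have hx0 : x ≠ 0 := by
      intro h
      rw [h] at hx2
      norm_num at hx2
    rw [Polynomial.mem_rootSet]
    refine ⟨frRev_ne_zero, ?_⟩
    simp only [frRev, map_add, map_sub, map_mul, map_pow, map_ofNat, Polynomial.aeval_X,
      map_one]
    have h1 : x * x⁻¹ = 1 := mul_inv_cancel₀ hx0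
    apply mul_left_cancel₀ (pow_ne_zero 5 hx0)
    rw [mul_zero]
    linear_combination hx2 + (162 * ((x * x⁻¹) ^ 4 + (x * x⁻¹) ^ 3 + (x * x⁻¹) ^ 2 + x * x⁻¹ + 1)
      - 432 * x * ((x * x⁻¹) ^ 3 + (x * x⁻¹) ^ 2 + x * x⁻¹ + 1)
      + 504 * x ^ 2 * ((x * x⁻¹) ^ 2 + x * x⁻¹ + 1)
      - 299 * x ^ 3 * (x * x⁻¹ + 1) + 60 * x ^ 4) * h1
  · intro a b h
    have := congrArg Subtype.val h
    exact Subtype.ext (inv_injective this)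

lemma frQuintic_real_roots_ge : 2 ≤ Fintype.card (frQuintic.rootSet ℝ) := by
  have hq0 : frQuintic ≠ 0 := frQuintic_irreducible.ne_zero
  set f : ℝ → ℝ := fun x => Polynomial.aeval x frQuintic with hfdef
  have hc : ∀ s : Set ℝ, ContinuousOn f s := fun s => frQuintic.continuousOn_aeval
  have hf0 : f 0 = 162 := by
    show Polynomial.aeval (0 : ℝ) frQuintic = 162
    rw [frQuintic_aeval_real]; norm_num
  have hf1 : f 1 = -4 := by
    show Polynomial.aeval (1 : ℝ) frQuintic = -4
    rw [frQuintic_aeval_real]; norm_num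
  have hf2 : f 2 = -86 := by
    show Polynomial.aeval (2 : ℝ) frQuintic = -86
    rw [frQuintic_aeval_real]; norm_num
  have hf3 : f 3 = 432 := by
    show Polynomial.aeval (3 : ℝ) frQuintic = 432
    rw [frQuintic_aeval_real]; norm_num
  obtain ⟨x, hx, hxr⟩ := intermediate_value_Ioo' (by norm_num : (0:ℝ) ≤ 1) (hc _)
    (by rw [hf0, hf1]; exact Set.mem_Ioo.mpr (by norm_num) : (0:ℝ) ∈ Set.Ioo (f 1) (f 0))
  obtain ⟨y, hy, hyr⟩ := intermediate_value_Ioo (by norm_num : (2:ℝ) ≤ 3) (hc _)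
    (by rw [hf2, hf3]; exact Set.mem_Ioo.mpr (by norm_num) : (0:ℝ) ∈ Set.Ioo (f 2) (f 3))
  have hxy : x ≠ y := ne_of_lt (by linarith [hx.2, hy.1])
  have key : ↑({x, y} : Finset ℝ) ⊆ frQuintic.rootSet ℝ := by
    intro z hz
    simp only [Finset.coe_insert, Finset.coe_singleton, Set.mem_insert_iff,
      Set.mem_singleton_iff] at hz
    rw [Polynomial.mem_rootSet]
    rcases hz with rfl | rfl
    · exact ⟨hq0, hxr⟩
    · exact ⟨hq0, hyr⟩
  convert Fintype.card_le_of_embedding (Set.embeddingOfSubset _ _ key)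
  simp only [Finset.coe_sort_coe, Fintype.card_coe, Finset.card_singleton,
    Finset.card_insert_of_notMem (mt Finset.mem_singleton.mp hxy)]

lemma frQuintic_complex_roots : Fintype.card (frQuintic.rootSet ℂ) = 5 :=
  (Polynomial.card_rootSet_eq_natDegree frQuintic_irreducible.separable
    (IsAlgClosed.splits _)).trans frQuintic_natDegree

/-- `h(x) = x⁵ + 60x⁴ − 299x³ + 504x² − 432x + 162` is irreducible over `ℚ`, has exactly
`5` complex roots, and its Galois group acts on its complex roots as the full symmetric
group `S₅`. -/
theorem frQuintic_irreducible_card_roots_and_gal_eq_symmetric :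
    Irreducible frQuintic ∧ Fintype.card (frQuintic.rootSet ℂ) = 5 ∧
      Function.Bijective (Polynomial.Gal.galActionHom frQuintic ℂ) := by
  refine ⟨frQuintic_irreducible, frQuintic_complex_roots, ?_⟩
  apply Polynomial.Gal.galActionHom_bijective_of_prime_degree' frQuintic_irreducible
  · rw [frQuintic_natDegree]; norm_num
  · rw [frQuintic_complex_roots]
    have := frQuintic_real_roots_le
    omega
  · rw [frQuintic_complex_roots]
    have := frQuintic_real_roots_ge
    omega
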